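/- Let X be a Banach space, K a compact operator, P an idempotent bounded operator, and T = I − P + K. Then there exist a bounded operator S and compact operators K₁, K₂ with S(T + P) = I + K₁ and (T + P)S = I + K₂, the operator TP − PT is compact, and PT + λI is Fredholm for every nonzero scalar λ (i.e., PT is Riesz up to compact perturbation). Hence T is a pseudo B-Fredholm operator with associated idempotent P. -/

import Mathlib

open ContinuousLinearMap

/-- A bounded operator is Fredholm if its kernel is finite dimensional and its range
is closed of finite codimension. -/
def IsFredholm {E : Type*} [NormedAddCommGroup E] [NormedSpace ℂ E] (T : E →L[ℂ] E) : Prop :=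
  FiniteDimensional ℂ (LinearMap.ker (T : E →ₗ[ℂ] E)) ∧ IsClosed (LinearMap.range (T : E →ₗ[ℂ] E) : Set E) ∧
    FiniteDimensional ℂ (E ⧸ LinearMap.range (T : E →ₗ[ℂ] E))

/-- The Fredholm index `dim N(T) - codim R(T)`. -/
noncomputable def fredInd {E : Type*} [NormedAddCommGroup E] [NormedSpace ℂ E]
    (T : E →L[ℂ] E) : ℤ :=
  (Module.finrank ℂ (LinearMap.ker (T : E →ₗ[ℂ] E)) : ℤ) - (Module.finrank ℂ (E ⧸ LinearMap.range (T : E →ₗ[ℂ] E)) : ℤ)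

/-- A Riesz operator: `T - λ•I` is Fredholm for every nonzero scalar `λ`. -/
def IsRiesz {E : Type*} [NormedAddCommGroup E] [NormedSpace ℂ E] (T : E →L[ℂ] E) : Prop :=
  ∀ c : ℂ, c ≠ 0 → _root_.IsFredholm (T - c • (1 : E →L[ℂ] E))

/-- Restriction of an operator to an invariant subspace. -/
def restrictCLM {E : Type*} [NormedAddCommGroup E] [NormedSpace ℂ E] (T : E →L[ℂ] E)
    (M : Submodule ℂ E) (h : ∀ x : M, T ↑x ∈ M) : M →L[ℂ] M :=
  (T.comp M.subtypeL).codRestrict M h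

/-- A finite rank operator. -/
def FinRank {E : Type*} [NormedAddCommGroup E] [NormedSpace ℂ E] (F : E →L[ℂ] E) : Prop :=
  FiniteDimensional ℂ (LinearMap.range (F : E →ₗ[ℂ] E))

/-- An operator commuting with `P` leaves the range of `P` invariant. -/
lemma rangeInv {E : Type*} [NormedAddCommGroup E] [NormedSpace ℂ E] {P T : E →L[ℂ] E}
    (hc : T ∘L P = P ∘L T) : ∀ x : LinearMap.range (P : E →ₗ[ℂ] E), T ↑x ∈ LinearMap.range (P : E →ₗ[ℂ] E) := by
  rintro ⟨_, y, rfl⟩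
  exact ⟨T y, by simpa using (DFunLike.congr_fun hc y).symm⟩

/-- An operator commuting with `P` leaves the kernel of `P` invariant. -/
lemma kerInv {E : Type*} [NormedAddCommGroup E] [NormedSpace ℂ E] {P T : E →L[ℂ] E}
    (hc : T ∘L P = P ∘L T) : ∀ x : LinearMap.ker (P : E →ₗ[ℂ] E), T ↑x ∈ LinearMap.ker (P : E →ₗ[ℂ] E) := by
  rintro ⟨x, hx⟩
  have h1 : T (P x) = P (T x) := DFunLike.congr_fun hc x
  simp only [LinearMap.mem_ker] at hx ⊢
  simp only [ContinuousLinearMap.coe_coe] at *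
  rw [← h1, hx, map_zero]

/-- `P T P` leaves the range of `P` invariant. -/
lemma rangeInvQuad {E : Type*} [NormedAddCommGroup E] [NormedSpace ℂ E] (P T : E →L[ℂ] E) :
    ∀ x : LinearMap.range (P : E →ₗ[ℂ] E), (P ∘L T ∘L P) ↑x ∈ LinearMap.range (P : E →ₗ[ℂ] E) :=
  fun x => ⟨T (P ↑x), rfl⟩

/-- `(I-P) T (I-P)` leaves the kernel of `P` invariant when `P` is idempotent. -/
lemma kerInvQuad {E : Type*} [NormedAddCommGroup E] [NormedSpace ℂ E] {P : E →L[ℂ] E}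
    (hP : P ∘L P = P) (T : E →L[ℂ] E) :
    ∀ x : LinearMap.ker (P : E →ₗ[ℂ] E), (((1 : E →L[ℂ] E) - P) ∘L T ∘L ((1 : E →L[ℂ] E) - P)) ↑x ∈
      LinearMap.ker (P : E →ₗ[ℂ] E) := by
  intro x
  have h : ∀ z, P (((1 : E →L[ℂ] E) - P) z) = 0 := by
    intro z
    have h2 : P (P z) = P z := DFunLike.congr_fun hP z
    simp [ContinuousLinearMap.sub_apply, h2]
  exact LinearMap.mem_ker.mpr (h _)


section RieszFredholm

open Metric Filter Topology Pointwise

variable {Y : Type*} [NormedAddCommGroup Y] [NormedSpace ℂ Y]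

section NoComplete
variable {X : Type*} [NormedAddCommGroup X] [NormedSpace ℂ X]

/-- From a compact operator and a norm-bounded sequence, extract a subsequence on which
`C` converges. -/
lemma exists_subseq_tendsto_of_isCompactOperator
    (C : X →L[ℂ] X) (hC : IsCompactOperator ⇑C) (u : ℕ → X) (hu : ∀ n, ‖u n‖ ≤ 1) :
    ∃ φ : ℕ → ℕ, StrictMono φ ∧ ∃ y, Tendsto (fun n => C (u (φ n))) atTop (𝓝 y) := by
  have hc : IsCompact (closure (⇑C '' closedBall 0 1)) :=
    hC.isCompact_closure_image_closedBall (f := (C : X →ₗ[ℂ] X)) 1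
  have hmem : ∀ n, C (u n) ∈ closure (⇑C '' closedBall 0 1) := fun n =>
    subset_closure ⟨u n, by simpa [mem_closedBall_zero_iff] using hu n, rfl⟩
  obtain ⟨y, -, φ, hφ, hy⟩ := hc.tendsto_subseq hmem
  exact ⟨φ, hφ, y, hy⟩

lemma isClosed_sup_span_singleton {R : Submodule ℂ X} (hR : IsClosed (R : Set X)) (z : X) :
    IsClosed ((R ⊔ Submodule.span ℂ {z} : Submodule ℂ X) : Set X) := by
  by_cases hz : z ∈ R
  · have h1 : R ⊔ Submodule.span ℂ {z} = R := by
      rw [sup_eq_left, Submodule.span_singleton_le_iff_mem]; exact hz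
    rwa [h1]
  · apply IsSeqClosed.isClosed
    intro x w hx hlim
    have hmem : ∀ n, ∃ r ∈ R, ∃ a : ℂ, r + a • z = x n := by
      intro n
      obtain ⟨r, hr, s, hs, hrs⟩ := Submodule.mem_sup.mp (hx n)
      obtain ⟨a, rfl⟩ := Submodule.mem_span_singleton.mp hs
      exact ⟨r, hr, a, hrs⟩
    choose r hr a ha using hmem
    have hd : 0 < infDist z R := hR.notMem_iff_infDist_pos ⟨0, R.zero_mem⟩ |>.mp hz
    -- bound on the norms of x n
    have hbdd : BddAbove (Set.range fun n => ‖x n‖) := (hlim.norm).bddAbove_range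
    obtain ⟨M, hM⟩ := hbdd
    have hMn : ∀ n, ‖x n‖ ≤ M := fun n => hM ⟨n, rfl⟩
    -- |a n| ≤ M / d
    have haM : ∀ n, ‖a n‖ ≤ M / infDist z R := by
      intro n
      rcases eq_or_ne (a n) 0 with h0 | h0
      · rw [h0]; simpa using div_nonneg (le_trans (norm_nonneg _) (hMn 0)) hd.le
      · rw [le_div_iff₀ hd]
        have hxr : x n = (a n) • (z - (-(a n)⁻¹ • r n)) := by
          rw [smul_sub, smul_smul, ← ha n]
          rw [mul_neg, mul_inv_cancel₀ h0, neg_one_smul, sub_neg_eq_add]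
          abel
        have h1 : infDist z R ≤ ‖z - (-(a n)⁻¹ • r n)‖ := by
          rw [← dist_eq_norm]
          exact infDist_le_dist_of_mem (R.smul_mem _ (hr n))
        calc ‖a n‖ * infDist z R ≤ ‖a n‖ * ‖z - (-(a n)⁻¹ • r n)‖ := by
              gcongr
          _ = ‖x n‖ := by rw [hxr, norm_smul]
          _ ≤ M := hMn n
    -- extract convergent subsequence of a
    obtain ⟨b, -, φ, hφ, hb⟩ := (isCompact_closedBall (0:ℂ) (M / infDist z R)).tendsto_subseq
      (x := a) (fun n => by simpa [mem_closedBall_zero_iff] using haM n)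
    have hrlim : Tendsto (fun n => x (φ n) - a (φ n) • z) atTop (𝓝 (w - b • z)) :=
      ((hlim.comp hφ.tendsto_atTop).sub ((hb.smul_const z)))
    have hwb : w - b • z ∈ R := hR.isSeqClosed (fun n => by
      have := ha (φ n); simpa [← this] using hr (φ n)) hrlim
    exact Submodule.mem_sup.mpr ⟨w - b • z, hwb, b • z,
      Submodule.smul_mem _ _ (Submodule.mem_span_singleton_self z), by abel⟩

lemma isClosed_sup_span_list {R : Submodule ℂ X} (hR : IsClosed (R : Set X)) (l : List X) :
    IsClosed ((R ⊔ Submodule.span ℂ {x | x ∈ l} : Submodule ℂ X) : Set X) := by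
  induction l with
  | nil => simpa [Submodule.span_empty] using hR
  | cons hd tl ih =>
    have h1 : {x | x ∈ hd :: tl} = insert hd {x | x ∈ tl} := by ext; simp
    have h2 : (R ⊔ Submodule.span ℂ {x | x ∈ hd :: tl}) =
        (R ⊔ Submodule.span ℂ {x | x ∈ tl}) ⊔ Submodule.span ℂ {hd} := by
      rw [h1, Submodule.span_insert, sup_assoc, sup_comm (Submodule.span ℂ {hd}) _]
    rw [h2]
    exact isClosed_sup_span_singleton ih hd

lemma quotient_findim_of_sup_span_eq_top {R : Submodule ℂ X} (l : List X)
    (h : (R ⊔ Submodule.span ℂ {x | x ∈ l} : Submodule ℂ X) = ⊤) :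
    FiniteDimensional ℂ (X ⧸ R) := by
  have h1 : Submodule.span ℂ (R.mkQ '' {x | x ∈ l}) = ⊤ := by
    rw [← Submodule.map_span]
    have := congrArg (Submodule.map R.mkQ) h
    rw [Submodule.map_sup, Submodule.map_top, Submodule.range_mkQ] at this
    have hb : Submodule.map R.mkQ R = ⊥ := by
      rw [Submodule.eq_bot_iff]
      rintro x ⟨y, hy, rfl⟩
      simpa using (Submodule.Quotient.mk_eq_zero R).mpr hy
    rwa [hb, bot_sup_eq] at this
  have hfin : (R.mkQ '' {x | x ∈ l}).Finite := (l.finite_toSet).image _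
  have : Module.Finite ℂ (⊤ : Submodule ℂ (X ⧸ R)) := by
    rw [← h1]; exact Module.Finite.span_of_finite ℂ hfin
  exact Module.Finite.of_surjective (Submodule.topEquiv (R := ℂ) (M := X ⧸ R)).toLinearMap
    Submodule.topEquiv.surjective

lemma ker_findim_of_compact (C : X →L[ℂ] X) (hC : IsCompactOperator ⇑C) (c : ℂ) (hc : c ≠ 0) :
    FiniteDimensional ℂ (LinearMap.ker ((C + c • (1 : X →L[ℂ] X) : X →L[ℂ] X) : X →ₗ[ℂ] X)) := by
  set T := C + c • (1 : X →L[ℂ] X) with hTdef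
  have hfix : ∀ x, T x = 0 → x = (-c⁻¹) • C x := by
    intro x hx
    have : C x + c • x = 0 := by simpa [hTdef] using hx
    have h3 : C x = -(c • x) := by linear_combination (norm := module) this
    rw [h3, smul_neg, smul_smul, neg_mul, neg_smul, neg_neg, inv_mul_cancel₀ hc, one_smul]
  -- compact set containing the unit ball of the kernel
  have hKc : IsCompact ((-c⁻¹) • closure (⇑C '' closedBall 0 1)) :=
    (hC.isCompact_closure_image_closedBall (f := (C : X →ₗ[ℂ] X)) 1).smul _
  set S : Set X := {x | x ∈ LinearMap.ker (T : X →ₗ[ℂ] X) ∧ ‖x‖ ≤ 1} with hSdef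
  have hSc : IsClosed S := by
    have : S = (LinearMap.ker (T : X →ₗ[ℂ] X) : Set X) ∩ closedBall 0 1 := by
      ext x; simp [hSdef, mem_closedBall_zero_iff]
    rw [this]
    exact (ContinuousLinearMap.isClosed_ker T).inter Metric.isClosed_closedBall
  have hSsub : S ⊆ (-c⁻¹) • closure (⇑C '' closedBall 0 1) := by
    rintro x ⟨hx1, hx2⟩
    refine ⟨C x, subset_closure ⟨x, by simpa [mem_closedBall_zero_iff] using hx2, rfl⟩, ?_⟩
    exact (hfix x hx1).symm
  have hScompact : IsCompact S := hKc.of_isClosed_subset hSc hSsub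
  -- transfer to the subtype
  have hball : IsCompact (closedBall (0 : LinearMap.ker (T : X →ₗ[ℂ] X)) 1) := by
    rw [Topology.IsEmbedding.isCompact_iff (Topology.IsEmbedding.subtypeVal)]
    have himg : Subtype.val '' (closedBall (0 : LinearMap.ker (T : X →ₗ[ℂ] X)) 1) = S := by
      ext x
      simp only [Set.mem_image, mem_closedBall_zero_iff, hSdef, Set.mem_setOf_eq]
      constructor
      · rintro ⟨⟨y, hy⟩, h1, rfl⟩; exact ⟨hy, h1⟩
      · rintro ⟨h1, h2⟩; exact ⟨⟨x, h1⟩, h2, rfl⟩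
    rwa [himg]
  exact FiniteDimensional.of_isCompact_closedBall₀ ℂ one_pos hball

end NoComplete

section WithComplete
variable {X : Type*} [NormedAddCommGroup X] [NormedSpace ℂ X] [CompleteSpace X]

set_option linter.unusedSectionVars false

lemma range_closed_of_compact (C : X →L[ℂ] X) (hC : IsCompactOperator ⇑C) (c : ℂ) (hc : c ≠ 0) :
    IsClosed (LinearMap.range ((C + c • (1 : X →L[ℂ] X) : X →L[ℂ] X) : X →ₗ[ℂ] X) : Set X) := by
  set T := C + c • (1 : X →L[ℂ] X) with hTdef
  have hTx : ∀ x, T x = C x + c • x := by intro x; simp [hTdef]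
  have hxT : ∀ x : X, x = c⁻¹ • (T x - C x) := by
    intro x
    rw [hTx x]
    match_scalars <;> field_simp <;> simp
  haveI := ker_findim_of_compact C hC c hc
  -- complement of the kernel
  have hcc : (LinearMap.ker (T : X →ₗ[ℂ] X)).ClosedComplemented :=
    Submodule.ClosedComplemented.of_finiteDimensional _
  obtain ⟨hkc, q, hqc, hcompl⟩ :=
    Submodule.closedComplemented_iff_isClosed_exists_isClosed_isCompl.mp hcc
  -- T is bounded below on q
  have hbelow : ∃ δ : ℝ, 0 < δ ∧ ∀ x ∈ q, δ * ‖x‖ ≤ ‖T x‖ := by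
    by_contra hcon
    push_neg at hcon
    have hseq : ∀ n : ℕ, ∃ u ∈ q, ‖u‖ = 1 ∧ ‖T u‖ < 1 / (n + 1) := by
      intro n
      obtain ⟨x, hxq, hxlt⟩ := hcon (1 / (n + 1)) (by positivity)
      have hx0 : x ≠ 0 := by
        rintro rfl
        simp at hxlt
      refine ⟨((‖x‖ : ℂ))⁻¹ • x, q.smul_mem _ hxq, ?_, ?_⟩
      · rw [norm_smul, norm_inv, Complex.norm_real, norm_norm,
          inv_mul_cancel₀ (norm_ne_zero_iff.mpr hx0)]
      · rw [map_smul, norm_smul, norm_inv, Complex.norm_real, norm_norm,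
          inv_mul_lt_iff₀ (norm_pos_iff.mpr hx0)]
        calc ‖T x‖ < 1 / (↑n + 1) * ‖x‖ := hxlt
          _ = ‖x‖ * (1 / (↑n + 1)) := by ring
    choose u huq hun hulim using hseq
    have hT0 : Tendsto (fun n => T (u n)) atTop (𝓝 0) := by
      rw [tendsto_iff_norm_sub_tendsto_zero]
      simp only [sub_zero]
      refine squeeze_zero (fun n => norm_nonneg _) (fun n => (hulim n).le) ?_
      exact tendsto_one_div_add_atTop_nhds_zero_nat
    obtain ⟨φ, hφ, y, hy⟩ := exists_subseq_tendsto_of_isCompactOperator C hC u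
      (fun n => (hun n).le)
    have hulim' : Tendsto (fun n => u (φ n)) atTop (𝓝 (c⁻¹ • (0 - y))) := by
      have h1 : Tendsto (fun n => c⁻¹ • (T (u (φ n)) - C (u (φ n)))) atTop
          (𝓝 (c⁻¹ • (0 - y))) :=
        (((hT0.comp hφ.tendsto_atTop).sub hy).const_smul c⁻¹)
      convert h1 using 2 with n
      exact hxT (u (φ n))
    set v := c⁻¹ • ((0 : X) - y) with hv
    have hvq : v ∈ q := hqc.isSeqClosed (fun n => huq (φ n)) hulim'
    have hvk : v ∈ LinearMap.ker (T : X →ₗ[ℂ] X) := by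
      rw [LinearMap.mem_ker]
      have : Tendsto (fun n => T (u (φ n))) atTop (𝓝 (T v)) :=
        (T.continuous.tendsto v).comp hulim'
      exact tendsto_nhds_unique this (hT0.comp hφ.tendsto_atTop)
    have hv0 : v = 0 := by
      have : v ∈ LinearMap.ker (T : X →ₗ[ℂ] X) ⊓ q := ⟨hvk, hvq⟩
      rwa [hcompl.inf_eq_bot, Submodule.mem_bot] at this
    have hnv : Tendsto (fun n => ‖u (φ n)‖) atTop (𝓝 ‖v‖) := hulim'.norm
    rw [hv0, norm_zero] at hnv
    have h1 : Tendsto (fun _ : ℕ => (1:ℝ)) atTop (𝓝 0) := by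
      convert hnv using 2 with n
      exact (hun (φ n)).symm
    exact one_ne_zero (tendsto_nhds_unique tendsto_const_nhds h1)
  obtain ⟨δ, hδ, hlow⟩ := hbelow
  -- every element in the range is T m for m ∈ q
  have hrange : ∀ y ∈ LinearMap.range (T : X →ₗ[ℂ] X), ∃ m ∈ q, T m = y := by
    rintro y ⟨z, rfl⟩
    have hz : z ∈ LinearMap.ker (T : X →ₗ[ℂ] X) ⊔ q := by rw [hcompl.sup_eq_top]; trivial
    obtain ⟨k, hk, m, hm, rfl⟩ := Submodule.mem_sup.mp hz
    refine ⟨m, hm, ?_⟩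
    have : (T : X →ₗ[ℂ] X) k = 0 := hk
    rw [map_add, this, zero_add]; rfl
  apply IsSeqClosed.isClosed
  intro g w hg hglim
  choose m hmq hTm using fun n => hrange (g n) (hg n)
  have hcauchy : CauchySeq m := by
    rw [Metric.cauchySeq_iff]
    intro ε hε
    obtain ⟨N, hN⟩ := Metric.cauchySeq_iff.mp hglim.cauchySeq (δ * ε) (by positivity)
    refine ⟨N, fun i hi j hj => ?_⟩
    have h1 : δ * ‖m i - m j‖ ≤ ‖T (m i - m j)‖ :=
      hlow _ (q.sub_mem (hmq i) (hmq j))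
    rw [map_sub, hTm, hTm] at h1
    have h2 : ‖g i - g j‖ < δ * ε := by
      have := hN i hi j hj; rwa [dist_eq_norm] at this
    rw [dist_eq_norm]
    nlinarith [norm_nonneg (m i - m j)]
  obtain ⟨w', hw'⟩ := cauchySeq_tendsto_of_complete hcauchy
  have : Tendsto (fun n => T (m n)) atTop (𝓝 (T w')) := (T.continuous.tendsto w').comp hw'
  have hTw' : T w' = w := by
    refine tendsto_nhds_unique ?_ hglim
    convert this using 2 with n
    exact (hTm n).symm
  exact ⟨w', hTw'⟩

lemma coker_findim_of_compact (C : X →L[ℂ] X) (hC : IsCompactOperator ⇑C) (c : ℂ) (hc : c ≠ 0) :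
    FiniteDimensional ℂ (X ⧸ LinearMap.range ((C + c • (1 : X →L[ℂ] X) : X →L[ℂ] X) : X →ₗ[ℂ] X)) := by
  set T := C + c • (1 : X →L[ℂ] X) with hTdef
  set R : Submodule ℂ X := LinearMap.range (T : X →ₗ[ℂ] X) with hRdef
  have hRc : IsClosed (R : Set X) := range_closed_of_compact C hC c hc
  by_contra hfin
  -- for every list, R ⊔ span l ≠ ⊤, so a Riesz vector exists
  have hpick : ∀ l : List X, ∃ u : X, ‖u‖ = 1 ∧
      ∀ y ∈ (R ⊔ Submodule.span ℂ {x | x ∈ l} : Submodule ℂ X), (1:ℝ)/2 ≤ ‖u - y‖ := by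
    intro l
    set V := (R ⊔ Submodule.span ℂ {x | x ∈ l} : Submodule ℂ X) with hV
    have hVc : IsClosed (V : Set X) := isClosed_sup_span_list hRc l
    have hVne : ∃ x : X, x ∉ V := by
      by_contra hcon
      push_neg at hcon
      exact hfin (quotient_findim_of_sup_span_eq_top l
        (top_unique fun x _ => hcon x))
    obtain ⟨x₀, hx₀, hx₀r⟩ := riesz_lemma hVc hVne (show (1:ℝ)/2 < 1 by norm_num)
    have hx0 : x₀ ≠ 0 := fun h => hx₀ (h ▸ V.zero_mem)
    refine ⟨((‖x₀‖ : ℂ))⁻¹ • x₀, ?_, ?_⟩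
    · rw [norm_smul, norm_inv, Complex.norm_real, norm_norm,
        inv_mul_cancel₀ (norm_ne_zero_iff.mpr hx0)]
    · intro y hy
      have hn0 : ‖x₀‖ ≠ 0 := norm_ne_zero_iff.mpr hx0
      have hxc : ((‖x₀‖ : ℂ)) ≠ 0 := by exact_mod_cast hn0
      have h1 : (1:ℝ)/2 * ‖x₀‖ ≤ ‖x₀ - (‖x₀‖ : ℂ) • y‖ :=
        hx₀r _ (V.smul_mem _ hy)
      have h2 : ((‖x₀‖ : ℂ))⁻¹ • (x₀ - (‖x₀‖ : ℂ) • y) = ((‖x₀‖ : ℂ))⁻¹ • x₀ - y := by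
        rw [smul_sub, smul_smul, inv_mul_cancel₀ hxc, one_smul]
      calc (1:ℝ)/2 = ‖x₀‖⁻¹ * ((1:ℝ)/2 * ‖x₀‖) := by field_simp
        _ ≤ ‖x₀‖⁻¹ * ‖x₀ - (‖x₀‖ : ℂ) • y‖ := by gcongr
        _ = ‖((‖x₀‖ : ℂ))⁻¹‖ * ‖x₀ - (‖x₀‖ : ℂ) • y‖ := by
            rw [norm_inv, Complex.norm_real, norm_norm]
        _ = ‖((‖x₀‖ : ℂ))⁻¹ • (x₀ - (‖x₀‖ : ℂ) • y)‖ := (norm_smul _ _).symm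
        _ = ‖((‖x₀‖ : ℂ))⁻¹ • x₀ - y‖ := by rw [h2]
  choose pick hpick1 hpick2 using hpick
  -- the recursively defined list of Riesz vectors
  let seq : ℕ → List X := fun n => Nat.rec [] (fun _ l => pick l :: l) n
  have hseq_succ : ∀ n, seq (n + 1) = pick (seq n) :: seq n := fun n => rfl
  set u : ℕ → X := fun n => pick (seq n) with hu
  have humem : ∀ m n, m < n → u m ∈ seq n := by
    intro m n hmn
    induction n with
    | zero => omega
    | succ k ih =>
      rw [hseq_succ]
      rcases Nat.lt_succ_iff_lt_or_eq.mp hmn with h | h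
      · exact List.mem_cons_of_mem _ (ih h)
      · subst h; exact List.mem_cons_self
  -- extract convergent subsequence of C ∘ u
  obtain ⟨φ, hφ, y, hy⟩ := exists_subseq_tendsto_of_isCompactOperator C hC u
    (fun n => (hpick1 (seq n)).le)
  -- the separation property
  have hsep : ∀ m n, m < n → ‖c‖ / 2 ≤ ‖C (u n) - C (u m)‖ := by
    intro m n hmn
    have hTx : ∀ x, T x = C x + c • x := by intro x; simp [hTdef]
    have hCx : ∀ x, C x = T x - c • x := by intro x; rw [hTx]; abel
    set v : X := u m + c⁻¹ • (T (u n) - T (u m)) with hv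
    have hvmem : v ∈ (R ⊔ Submodule.span ℂ {x | x ∈ seq n} : Submodule ℂ X) := by
      apply Submodule.add_mem
      · exact Submodule.mem_sup_right (Submodule.subset_span (humem m n hmn))
      · exact Submodule.mem_sup_left (Submodule.smul_mem _ _
          (Submodule.sub_mem _ ⟨u n, rfl⟩ ⟨u m, rfl⟩))
    have hkey : C (u n) - C (u m) = (-c) • (u n - v) := by
      rw [hCx (u n), hCx (u m), hv]
      match_scalars <;> field_simp
    rw [hkey, norm_smul, norm_neg]
    have := hpick2 (seq n) v hvmem
    calc ‖c‖ / 2 = ‖c‖ * (1/2) := by ring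
      _ ≤ ‖c‖ * ‖u n - v‖ := by gcongr
  -- contradiction with Cauchy
  have hcauchy : CauchySeq (fun n => C (u (φ n))) := hy.cauchySeq
  obtain ⟨N, hN⟩ := Metric.cauchySeq_iff'.mp hcauchy (‖c‖/2) (div_pos (norm_pos_iff.mpr hc) two_pos)
  have h1 := hN (N + 1) (Nat.le_succ N)
  rw [dist_eq_norm] at h1
  exact absurd h1 (not_lt.mpr (hsep (φ N) (φ (N+1)) (hφ (Nat.lt_succ_self N))))

end WithComplete

end RieszFredholm

/-- Let `K` be compact, `P` idempotent and `T = I - P + K`. Then `T + P`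
is invertible modulo compact operators, `TP - PT` is compact and `PT + λI` is Fredholm for
every nonzero `λ`; hence `T` is a pseudo B-Fredholm operator with associated idempotent
`P`. -/
theorem identity_sub_idempotent_pseudo_BFredholm
    {X : Type*} [NormedAddCommGroup X] [NormedSpace ℂ X] [CompleteSpace X]
    (P K T : X →L[ℂ] X) (hP : P ∘L P = P) (hK : IsCompactOperator ⇑K)
    (hT : T = 1 - P + K) :
    (∃ (S K₁ K₂ : X →L[ℂ] X), IsCompactOperator ⇑K₁ ∧ IsCompactOperator ⇑K₂ ∧
      S ∘L (T + P) = 1 + K₁ ∧ (T + P) ∘L S = 1 + K₂) ∧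
    IsCompactOperator ⇑(T ∘L P - P ∘L T) ∧
    (∀ c : ℂ, c ≠ 0 → _root_.IsFredholm (P ∘L T + c • (1 : X →L[ℂ] X))) := by
  have hTP : T + P = 1 + K := by rw [hT]; abel
  have hP' : P * P = P := hP
  refine ⟨⟨1, K, K, hK, hK, ?_, ?_⟩, ?_, ?_⟩
  · rw [hTP]; simp only [← ContinuousLinearMap.mul_def]; simp
  · rw [hTP]; simp only [← ContinuousLinearMap.mul_def]; simp
  · have h1 : T ∘L P - P ∘L T = K ∘L P - P ∘L K := by
      rw [hT]
      simp only [← ContinuousLinearMap.mul_def]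
      rw [add_mul, sub_mul, one_mul, mul_add, mul_sub, mul_one, hP']
      abel
    rw [h1]
    have h2 : IsCompactOperator ⇑(K ∘L P) := by
      have := hK.comp_clm P
      rwa [← ContinuousLinearMap.coe_comp'] at this
    have h3 : IsCompactOperator ⇑(P ∘L K) := by
      have := hK.clm_comp P
      rwa [← ContinuousLinearMap.coe_comp'] at this
    have := h2.sub h3
    rwa [show ⇑(K ∘L P - P ∘L K) = ⇑(K ∘L P) - ⇑(P ∘L K) from rfl]
  · intro c hc
    have h4 : P ∘L T = P ∘L K := by
      rw [hT]
      simp only [← ContinuousLinearMap.mul_def]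
      rw [mul_add, mul_sub, mul_one, hP']
      abel
    have h3 : IsCompactOperator ⇑(P ∘L K) := by
      have := hK.clm_comp P
      rwa [← ContinuousLinearMap.coe_comp'] at this
    rw [h4]
    exact ⟨ker_findim_of_compact _ h3 c hc, range_closed_of_compact _ h3 c hc,
      coker_findim_of_compact _ h3 c hc⟩
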